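/- Let d¹, d⁰ ∈ ℝⁿ and ε > 0, and define f = (1/ε²)(|d¹|² d¹ - d⁰) and F_ε(v) = (1/(4ε²))(|v|²-1)². Then ⟨f, d¹ - d⁰⟩ = F_ε(d¹) - F_ε(d⁰) + (1/(2ε²))(|d¹|² + 1)|d¹ - d⁰|² + (1/(4ε²))(|d¹|² - |d⁰|²)². -/

import Mathlib

/-- Pointwise identity for the convex-splitting treatment of the Ginzburg–Landau
penalty: with `f = (1/ε²)(|d¹|² d¹ - d⁰)` and `F_ε v = (1/(4ε²))(|v|²-1)²`,
`⟨f, d¹ - d⁰⟩ = F_ε d¹ - F_ε d⁰ + (1/(2ε²))(|d¹|²+1)|d¹-d⁰|² + (1/(4ε²))(|d¹|²-|d⁰|²)²`. -/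
theorem penalty_splitting_identity {n : ℕ} (d1 d0 : EuclideanSpace ℝ (Fin n))
    (ε : ℝ) (hε : 0 < ε)
    (f : EuclideanSpace ℝ (Fin n))
    (hf : f = (1 / ε ^ 2) • (‖d1‖ ^ 2 • d1 - d0))
    (Fε : EuclideanSpace ℝ (Fin n) → ℝ)
    (hFε : ∀ v, Fε v = (1 / (4 * ε ^ 2)) * (‖v‖ ^ 2 - 1) ^ 2) :
    (inner ℝ f (d1 - d0) : ℝ)
      = Fε d1 - Fε d0 + (1 / (2 * ε ^ 2)) * (‖d1‖ ^ 2 + 1) * ‖d1 - d0‖ ^ 2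
        + (1 / (4 * ε ^ 2)) * (‖d1‖ ^ 2 - ‖d0‖ ^ 2) ^ 2 := by
  have e1 : ‖d1 - d0‖ ^ 2 = ‖d1‖ ^ 2 - 2 * inner ℝ d1 d0 + ‖d0‖ ^ 2 :=
    norm_sub_sq_real d1 d0
  have e2 : (inner ℝ f (d1 - d0) : ℝ)
      = (1 / ε ^ 2) * (‖d1‖ ^ 2 * (inner ℝ d1 d1 : ℝ) - ‖d1‖ ^ 2 * inner ℝ d1 d0
          - inner ℝ d0 d1 + inner ℝ d0 d0) := by
    rw [hf, real_inner_smul_left, inner_sub_left, real_inner_smul_left,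
      inner_sub_right, inner_sub_right]
    ring
  have e3 : (inner ℝ d1 d1 : ℝ) = ‖d1‖ ^ 2 := real_inner_self_eq_norm_sq d1
  have e4 : (inner ℝ d0 d0 : ℝ) = ‖d0‖ ^ 2 := real_inner_self_eq_norm_sq d0
  have e5 : (inner ℝ d0 d1 : ℝ) = inner ℝ d1 d0 := real_inner_comm d1 d0
  rw [e2, e3, e4, e5, hFε, hFε, e1]
  have h2 : ε ^ 2 ≠ 0 := pow_ne_zero 2 hε.ne'
  field_simp
  ring
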